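/- Let A < B be symmetric n×n matrices, U = B − A. For (h, k) ∈ ℝⁿ × ℝⁿ, the inequality ‖k − ½(A+B)h‖_{U⁻¹} ≤ ½‖h‖_U holds if and only if Sg_{𝒮_A, 𝒮_B}((h,k)) ≥ 0, where Sg is computed via the decomposition (h,k) = v₁ + v₂ with v₁ in the graph Lagrangian of A and v₂ in the graph Lagrangian of B. Equivalently, the set {(h,k) : ‖k − ½(A+B)h‖_{U⁻¹} ≤ ½‖h‖_U} equals the cone C(𝒮_A, 𝒮_B) = {(h, Sh) : A ≤ S ≤ B}. -/

import Mathlib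

open Matrix

/-- The standard symplectic form on ℝ²ⁿ = ℝⁿ × ℝⁿ. -/
def omegaForm {n : ℕ} (u v : (Fin n → ℝ) × (Fin n → ℝ)) : ℝ :=
  v.2 ⬝ᵥ u.1 - u.2 ⬝ᵥ v.1

/-- The cone C(𝒮_A, 𝒮_B) between the graph Lagrangians of A ≤ B. -/
def coneBetween {n : ℕ} (S₁ S₂ : Matrix (Fin n) (Fin n) ℝ) :
    Set ((Fin n → ℝ) × (Fin n → ℝ)) :=
  {v | ∃ S : Matrix (Fin n) (Fin n) ℝ, S.IsSymm ∧ (S - S₁).PosSemidef ∧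
    (S₂ - S).PosSemidef ∧ v.2 = S *ᵥ v.1}

section Aux

open scoped MatrixOrder

variable {n : ℕ}

lemma stmt18_dot_self_nonneg (v : Fin n → ℝ) : 0 ≤ v ⬝ᵥ v :=
  Finset.sum_nonneg fun i _ => mul_self_nonneg _

lemma stmt18_symm_dot {M : Matrix (Fin n) (Fin n) ℝ} (hM : M.IsSymm) (x y : Fin n → ℝ) :
    x ⬝ᵥ (M *ᵥ y) = y ⬝ᵥ (M *ᵥ x) := by
  rw [dotProduct_mulVec, ← vecMul_transpose, hM.eq, dotProduct_comm]

lemma stmt18_quad_nonneg {M : Matrix (Fin n) (Fin n) ℝ} (hM : M.PosSemidef) (x : Fin n → ℝ) :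
    0 ≤ x ⬝ᵥ (M *ᵥ x) := by simpa using hM.dotProduct_mulVec_nonneg x

lemma stmt18_sqrt_half_iff {a b : ℝ} (ha : 0 ≤ a) (hb : 0 ≤ b) :
    Real.sqrt a ≤ (1/2) * Real.sqrt b ↔ a ≤ (1/4) * b := by
  clear ha
  have e : (1/2 : ℝ) * Real.sqrt b = Real.sqrt ((1/4)*b) := by
    rw [Real.sqrt_mul (by norm_num), show Real.sqrt (1/4 : ℝ) = 1/2 by
      rw [show (1/4 : ℝ) = (1/2)^2 by norm_num, Real.sqrt_sq (by norm_num)]]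
  rw [e, Real.sqrt_le_sqrt_iff (by positivity)]

lemma stmt18_isHermitian_of_isSymm {M : Matrix (Fin n) (Fin n) ℝ} (h : M.IsSymm) :
    M.IsHermitian := by
  ext i j
  simp only [conjTranspose_apply, star_trivial]
  exact congrFun (congrFun h i) j

lemma stmt18_isSymm_of_isHermitian {M : Matrix (Fin n) (Fin n) ℝ} (h : M.IsHermitian) :
    M.IsSymm := by
  unfold Matrix.IsSymm
  ext i j
  have := congrFun (congrFun h i) j
  simpa [conjTranspose_apply] using this

lemma stmt18_vecMulVec_mulVec (x y z : Fin n → ℝ) :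
    vecMulVec x y *ᵥ z = (y ⬝ᵥ z) • x := by
  funext i
  simp only [vecMulVec_apply, mulVec, dotProduct, Pi.smul_apply, smul_eq_mul, Finset.sum_mul,
    Finset.mul_sum]
  exact Finset.sum_congr rfl fun j _ => by ring

lemma stmt18_psd_of_quad {M : Matrix (Fin n) (Fin n) ℝ} (hs : M.IsSymm)
    (hq : ∀ x, 0 ≤ x ⬝ᵥ (M *ᵥ x)) : M.PosSemidef :=
  PosSemidef.of_dotProduct_mulVec_nonneg (stmt18_isHermitian_of_isSymm hs) fun x => by simpa using hq x

set_option maxHeartbeats 1000000 in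
lemma stmt18_scalar_key {a b α p q : ℝ} (ha : 0 < a) (hb : 0 < b)
    (hcon : α^2*a + b ≤ (1/4)*a) :
    α*(b*p^2 - a*q^2) + 2*b*p*q ≤ (1/2)*(b*p^2 + a*q^2) ∧
    -((1/2)*(b*p^2 + a*q^2)) ≤ α*(b*p^2 - a*q^2) + 2*b*p*q := by
  have hα2 : α^2 ≤ 1/4 := by nlinarith
  have hfac : (1/4 - α^2) * a ≥ b := by nlinarith
  have h12 : (0:ℝ) < 1/2 - α := by
    rcases lt_or_eq_of_le (show α ≤ 1/2 by nlinarith [sq_nonneg α]) with h | h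
    · linarith
    · exfalso
      rw [h] at hfac
      norm_num at hfac
      nlinarith
  have h12' : (0:ℝ) < 1/2 + α := by
    rcases lt_or_eq_of_le (show -(1/2) ≤ α by nlinarith [sq_nonneg α]) with h | h
    · linarith
    · exfalso
      rw [← h] at hfac
      norm_num at hfac
      nlinarith
  constructor
  · nlinarith [sq_nonneg ((1/2 - α)*b*p - b*q), mul_pos h12 hb,
      mul_nonneg (mul_nonneg hb.le (sq_nonneg q)) (by nlinarith : (0:ℝ) ≤ (1/4 - α^2)*a - b)]
  · nlinarith [sq_nonneg ((1/2 + α)*b*p + b*q), mul_pos h12' hb,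
      mul_nonneg (mul_nonneg hb.le (sq_nonneg q)) (by nlinarith : (0:ℝ) ≤ (1/4 - α^2)*a - b)]

lemma stmt18_smul_one_psd {c : ℝ} (hc : 0 ≤ c) :
    (c • (1 : Matrix (Fin n) (Fin n) ℝ)).PosSemidef := by
  refine stmt18_psd_of_quad (by simp [Matrix.IsSymm, transpose_smul]) fun x => ?_
  have : (c • (1 : Matrix (Fin n) (Fin n) ℝ)) *ᵥ x = c • x := by
    simp [smul_mulVec]
  rw [this, dotProduct_smul, smul_eq_mul]
  exact mul_nonneg hc (stmt18_dot_self_nonneg x)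

set_option maxHeartbeats 2000000 in
lemma stmt18_exists_T (h' w' : Fin n → ℝ) (hh : h' ≠ 0)
    (hle : w' ⬝ᵥ w' ≤ (1/4) * (h' ⬝ᵥ h')) :
    ∃ T : Matrix (Fin n) (Fin n) ℝ, T.IsSymm ∧
      ((1/2:ℝ) • (1 : Matrix (Fin n) (Fin n) ℝ) - T).PosSemidef ∧
      ((1/2:ℝ) • (1 : Matrix (Fin n) (Fin n) ℝ) + T).PosSemidef ∧ T *ᵥ h' = w' := by
  have ha : 0 < h' ⬝ᵥ h' :=
    lt_of_le_of_ne (stmt18_dot_self_nonneg h') fun h0 => hh (dotProduct_self_eq_zero.mp h0.symm)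
  obtain ⟨α, u, hw', huh⟩ : ∃ (α : ℝ) (u : Fin n → ℝ), w' = α • h' + u ∧ u ⬝ᵥ h' = 0 := by
    refine ⟨(w' ⬝ᵥ h') / (h' ⬝ᵥ h'), w' - ((w' ⬝ᵥ h') / (h' ⬝ᵥ h')) • h', by abel, ?_⟩
    simp only [sub_dotProduct, smul_dotProduct, smul_eq_mul]
    field_simp
    ring
  have hhu : h' ⬝ᵥ u = 0 := by rw [dotProduct_comm]; exact huh
  have hww : w' ⬝ᵥ w' = α^2 * (h' ⬝ᵥ h') + u ⬝ᵥ u := by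
    rw [hw']
    simp only [add_dotProduct, dotProduct_add, smul_dotProduct, dotProduct_smul, smul_eq_mul,
      huh, hhu]
    ring
  have hcon : α^2 * (h' ⬝ᵥ h') + u ⬝ᵥ u ≤ (1/4) * (h' ⬝ᵥ h') := by rw [← hww]; exact hle
  by_cases hu : u = 0
  · have hα2 : α^2 ≤ 1/4 := by
      have : u ⬝ᵥ u = 0 := by simp [hu]
      nlinarith [this, hcon, ha]
    refine ⟨α • 1, by simp [Matrix.IsSymm, transpose_smul], ?_, ?_, ?_⟩
    · have e : (1/2:ℝ) • (1 : Matrix (Fin n) (Fin n) ℝ) - α • 1 = (1/2 - α) • 1 := by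
        rw [sub_smul]
      rw [e]
      exact stmt18_smul_one_psd (by nlinarith [sq_nonneg α])
    · have e : (1/2:ℝ) • (1 : Matrix (Fin n) (Fin n) ℝ) + α • 1 = (1/2 + α) • 1 := by
        rw [add_smul]
      rw [e]
      exact stmt18_smul_one_psd (by nlinarith [sq_nonneg α])
    · rw [hw', hu]
      simp [smul_mulVec]
  · have hb : 0 < u ⬝ᵥ u :=
      lt_of_le_of_ne (stmt18_dot_self_nonneg u) fun h0 => hu (dotProduct_self_eq_zero.mp h0.symm)
    have ha' : (h' ⬝ᵥ h') ≠ 0 := ne_of_gt ha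
    have hb' : (u ⬝ᵥ u) ≠ 0 := ne_of_gt hb
    set T : Matrix (Fin n) (Fin n) ℝ :=
      α • ((h' ⬝ᵥ h')⁻¹ • vecMulVec h' h' - (u ⬝ᵥ u)⁻¹ • vecMulVec u u) +
        (h' ⬝ᵥ h')⁻¹ • (vecMulVec h' u + vecMulVec u h') with hT
    have hTsymm : T.IsSymm := by
      unfold Matrix.IsSymm
      ext i j
      simp only [hT, transpose_apply, Matrix.add_apply, Matrix.smul_apply, Matrix.sub_apply,
        vecMulVec_apply, smul_eq_mul]
      ring
    have hform : ∀ x : Fin n → ℝ, x ⬝ᵥ (T *ᵥ x) =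
        α*((h' ⬝ᵥ h')⁻¹*(h' ⬝ᵥ x)^2 - (u ⬝ᵥ u)⁻¹*(u ⬝ᵥ x)^2) +
          (h' ⬝ᵥ h')⁻¹*(2*(h' ⬝ᵥ x)*(u ⬝ᵥ x)) := by
      intro x
      rw [hT]
      simp only [add_mulVec, smul_mulVec, sub_mulVec, stmt18_vecMulVec_mulVec,
        dotProduct_add, dotProduct_smul, dotProduct_sub, smul_eq_mul]
      rw [dotProduct_comm x h', dotProduct_comm x u]
      ring
    have bessel : ∀ x : Fin n → ℝ,
        (u ⬝ᵥ u)*(h' ⬝ᵥ x)^2 + (h' ⬝ᵥ h')*(u ⬝ᵥ x)^2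
          ≤ (h' ⬝ᵥ h')*(u ⬝ᵥ u)*(x ⬝ᵥ x) := by
      intro x
      have h0 := stmt18_dot_self_nonneg (((h' ⬝ᵥ h')*(u ⬝ᵥ u)) • x - ((u ⬝ᵥ u)*(h' ⬝ᵥ x)) • h'
        - ((h' ⬝ᵥ h')*(u ⬝ᵥ x)) • u)
      simp only [sub_dotProduct, dotProduct_sub, smul_dotProduct, dotProduct_smul,
        smul_eq_mul] at h0
      rw [dotProduct_comm x h', dotProduct_comm x u, huh, hhu] at h0
      have h1 : 0 ≤ ((h' ⬝ᵥ h')*(u ⬝ᵥ u)) * (((h' ⬝ᵥ h')*(u ⬝ᵥ u)*(x ⬝ᵥ x))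
          - ((u ⬝ᵥ u)*(h' ⬝ᵥ x)^2 + (h' ⬝ᵥ h')*(u ⬝ᵥ x)^2)) := by nlinarith [h0]
      have hab : 0 < (h' ⬝ᵥ h')*(u ⬝ᵥ u) := mul_pos ha hb
      nlinarith [le_of_mul_le_mul_left (by linarith : ((h' ⬝ᵥ h')*(u ⬝ᵥ u)) * 0 ≤
        ((h' ⬝ᵥ h')*(u ⬝ᵥ u)) * (((h' ⬝ᵥ h')*(u ⬝ᵥ u)*(x ⬝ᵥ x))
          - ((u ⬝ᵥ u)*(h' ⬝ᵥ x)^2 + (h' ⬝ᵥ h')*(u ⬝ᵥ x)^2))) hab]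
    have hTh : T *ᵥ h' = w' := by
      rw [hT, hw']
      simp only [add_mulVec, smul_mulVec, sub_mulVec, stmt18_vecMulVec_mulVec, huh]
      funext i
      simp only [Pi.add_apply, Pi.smul_apply, Pi.sub_apply, Pi.zero_apply, smul_eq_mul]
      field_simp
      ring
    have main : ∀ (s : ℝ), s = 1 ∨ s = -1 → ∀ x : Fin n → ℝ,
        0 ≤ x ⬝ᵥ (((1/2:ℝ) • (1 : Matrix (Fin n) (Fin n) ℝ) + s • T) *ᵥ x) := by
      intro s hs x
      have e : x ⬝ᵥ (((1/2:ℝ) • (1 : Matrix (Fin n) (Fin n) ℝ) + s • T) *ᵥ x)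
          = (1/2) * (x ⬝ᵥ x) + s * (x ⬝ᵥ (T *ᵥ x)) := by
        simp only [add_mulVec, smul_mulVec, dotProduct_add, dotProduct_smul, smul_eq_mul,
          one_mulVec]
      rw [e, hform x]
      obtain ⟨hk1, hk2⟩ := stmt18_scalar_key ha hb hcon (p := h' ⬝ᵥ x) (q := u ⬝ᵥ x)
      have hbes := bessel x
      have hab : 0 < (h' ⬝ᵥ h')*(u ⬝ᵥ u) := mul_pos ha hb
      have hmul : 0 ≤ ((h' ⬝ᵥ h')*(u ⬝ᵥ u)) * ((1/2) * (x ⬝ᵥ x) +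
          s * (α*((h' ⬝ᵥ h')⁻¹*(h' ⬝ᵥ x)^2 - (u ⬝ᵥ u)⁻¹*(u ⬝ᵥ x)^2) +
            (h' ⬝ᵥ h')⁻¹*(2*(h' ⬝ᵥ x)*(u ⬝ᵥ x)))) := by
        have expand : ((h' ⬝ᵥ h')*(u ⬝ᵥ u)) * ((1/2) * (x ⬝ᵥ x) +
            s * (α*((h' ⬝ᵥ h')⁻¹*(h' ⬝ᵥ x)^2 - (u ⬝ᵥ u)⁻¹*(u ⬝ᵥ x)^2) +
              (h' ⬝ᵥ h')⁻¹*(2*(h' ⬝ᵥ x)*(u ⬝ᵥ x))))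
            = (1/2) * ((h' ⬝ᵥ h')*(u ⬝ᵥ u)*(x ⬝ᵥ x)) +
              s * (α*((u ⬝ᵥ u)*(h' ⬝ᵥ x)^2 - (h' ⬝ᵥ h')*(u ⬝ᵥ x)^2) +
                2*(u ⬝ᵥ u)*(h' ⬝ᵥ x)*(u ⬝ᵥ x)) := by
          field_simp
        rw [expand]
        rcases hs with h | h <;> rw [h] <;> nlinarith [hk1, hk2, hbes]
      linarith [le_of_mul_le_mul_left (by linarith : ((h' ⬝ᵥ h')*(u ⬝ᵥ u)) * 0 ≤
        ((h' ⬝ᵥ h')*(u ⬝ᵥ u)) * ((1/2) * (x ⬝ᵥ x) +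
          s * (α*((h' ⬝ᵥ h')⁻¹*(h' ⬝ᵥ x)^2 - (u ⬝ᵥ u)⁻¹*(u ⬝ᵥ x)^2) +
            (h' ⬝ᵥ h')⁻¹*(2*(h' ⬝ᵥ x)*(u ⬝ᵥ x))))) hab]
    refine ⟨T, hTsymm, ?_, ?_, hTh⟩
    · have hsymm : ((1/2:ℝ) • (1 : Matrix (Fin n) (Fin n) ℝ) - T).IsSymm := by
        unfold Matrix.IsSymm
        rw [transpose_sub, transpose_smul, transpose_one, hTsymm.eq]
      refine stmt18_psd_of_quad hsymm fun x => ?_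
      have e : (1/2:ℝ) • (1 : Matrix (Fin n) (Fin n) ℝ) - T
          = (1/2:ℝ) • (1 : Matrix (Fin n) (Fin n) ℝ) + (-1 : ℝ) • T := by
        rw [neg_one_smul]; abel
      rw [e]
      exact main (-1) (Or.inr rfl) x
    · have hsymm : ((1/2:ℝ) • (1 : Matrix (Fin n) (Fin n) ℝ) + T).IsSymm := by
        unfold Matrix.IsSymm
        rw [transpose_add, transpose_smul, transpose_one, hTsymm.eq]
      refine stmt18_psd_of_quad hsymm fun x => ?_
      have e : (1/2:ℝ) • (1 : Matrix (Fin n) (Fin n) ℝ) + T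
          = (1/2:ℝ) • (1 : Matrix (Fin n) (Fin n) ℝ) + (1 : ℝ) • T := by
        rw [one_smul]
      rw [e]
      exact main 1 (Or.inl rfl) x

lemma stmt18_cone_to_ineq (A B S : Matrix (Fin n) (Fin n) ℝ)
    (hA : A.IsSymm) (hB : B.IsSymm) (hS : S.IsSymm) (hU : (B - A).PosDef)
    (h1 : (S - A).PosSemidef) (h2 : (B - S).PosSemidef) (h : Fin n → ℝ) :
    ((B - A)⁻¹ *ᵥ (S *ᵥ h - (1/2 : ℝ) • ((A + B) *ᵥ h))) ⬝ᵥ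
      (S *ᵥ h - (1/2 : ℝ) • ((A + B) *ᵥ h)) ≤ (1/4) * (((B - A) *ᵥ h) ⬝ᵥ h) := by
  have hdet : IsUnit (B - A).det := isUnit_iff_ne_zero.mpr (ne_of_gt hU.det_pos)
  set w : Fin n → ℝ := S *ᵥ h - (1/2 : ℝ) • ((A + B) *ᵥ h) with hw
  set v : Fin n → ℝ := (B - A)⁻¹ *ᵥ w with hv
  have hUv : (B - A) *ᵥ v = w := by
    rw [hv, mulVec_mulVec, mul_nonsing_inv _ hdet, one_mulVec]
  have rv := congrArg (fun z => v ⬝ᵥ z) hUv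
  simp only [hw, sub_mulVec, dotProduct_sub, add_mulVec, dotProduct_add, dotProduct_smul,
    smul_eq_mul] at rv
  rw [stmt18_symm_dot hA v h, stmt18_symm_dot hB v h, stmt18_symm_dot hS v h] at rv
  have q1 := stmt18_quad_nonneg h2 (h + (2:ℝ) • v)
  have q2 := stmt18_quad_nonneg h1 (h - (2:ℝ) • v)
  have key : (h + (2:ℝ) • v) ⬝ᵥ ((B - S) *ᵥ (h + (2:ℝ) • v))
      + (h - (2:ℝ) • v) ⬝ᵥ ((S - A) *ᵥ (h - (2:ℝ) • v))
      = ((B - A) *ᵥ h) ⬝ᵥ h - 4 * (v ⬝ᵥ w) := by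
    simp only [hw, sub_mulVec, mulVec_add, mulVec_sub, mulVec_smul, dotProduct_add,
      dotProduct_sub, add_dotProduct, sub_dotProduct, dotProduct_smul, smul_dotProduct,
      add_mulVec, smul_eq_mul]
    rw [stmt18_symm_dot hA v h, stmt18_symm_dot hB v h, stmt18_symm_dot hS v h,
      dotProduct_comm (A *ᵥ h) h, dotProduct_comm (B *ᵥ h) h]
    linear_combination 4*rv
  linarith [q1, q2, key]

lemma stmt18_part1_core (A B : Matrix (Fin n) (Fin n) ℝ) (hA : A.IsSymm) (hB : B.IsSymm)
    (hU : (B - A).PosDef) (x₁ x₂ : Fin n → ℝ) :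
    (((B - A)⁻¹ *ᵥ ((A *ᵥ x₁ + B *ᵥ x₂) - (1/2 : ℝ) • ((A + B) *ᵥ (x₁ + x₂)))) ⬝ᵥ
        ((A *ᵥ x₁ + B *ᵥ x₂) - (1/2 : ℝ) • ((A + B) *ᵥ (x₁ + x₂)))
      ≤ (1/4) * (((B - A) *ᵥ (x₁ + x₂)) ⬝ᵥ (x₁ + x₂))) ↔
      0 ≤ (B *ᵥ x₂) ⬝ᵥ x₁ - (A *ᵥ x₁) ⬝ᵥ x₂ := by
  have hdet : IsUnit (B - A).det := isUnit_iff_ne_zero.mpr (ne_of_gt hU.det_pos)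
  have hwd : (A *ᵥ x₁ + B *ᵥ x₂) - (1/2 : ℝ) • ((A + B) *ᵥ (x₁ + x₂))
      = (1/2 : ℝ) • ((B - A) *ᵥ (x₂ - x₁)) := by
    simp only [add_mulVec, mulVec_add, mulVec_sub, sub_mulVec]
    module
  have e1 : (B - A)⁻¹ *ᵥ ((A *ᵥ x₁ + B *ᵥ x₂) - (1/2 : ℝ) • ((A + B) *ᵥ (x₁ + x₂)))
      = (1/2 : ℝ) • (x₂ - x₁) := by
    rw [hwd, mulVec_smul, mulVec_mulVec, nonsing_inv_mul _ hdet, one_mulVec]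
  rw [e1, hwd]
  have cA : ∀ x y : Fin n → ℝ, (A *ᵥ x) ⬝ᵥ y = x ⬝ᵥ (A *ᵥ y) := fun x y => by
    rw [dotProduct_comm, stmt18_symm_dot hA]
  have cB : ∀ x y : Fin n → ℝ, (B *ᵥ x) ⬝ᵥ y = x ⬝ᵥ (B *ᵥ y) := fun x y => by
    rw [dotProduct_comm, stmt18_symm_dot hB]
  have lhs_eq : ((1/2 : ℝ) • (x₂ - x₁)) ⬝ᵥ ((1/2 : ℝ) • ((B - A) *ᵥ (x₂ - x₁)))
      = (1/4) * ((x₂ - x₁) ⬝ᵥ ((B - A) *ᵥ (x₂ - x₁))) := by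
    rw [smul_dotProduct, dotProduct_smul]
    simp only [smul_eq_mul]
    ring
  rw [lhs_eq]
  have iden : (1/4) * (((B - A) *ᵥ (x₁ + x₂)) ⬝ᵥ (x₁ + x₂))
      - (1/4) * ((x₂ - x₁) ⬝ᵥ ((B - A) *ᵥ (x₂ - x₁)))
      = (B *ᵥ x₂) ⬝ᵥ x₁ - (A *ᵥ x₁) ⬝ᵥ x₂ := by
    simp only [sub_mulVec, mulVec_add, mulVec_sub, add_dotProduct, sub_dotProduct,
      dotProduct_add, dotProduct_sub, cA, cB]
    rw [stmt18_symm_dot hA x₂ x₁, stmt18_symm_dot hB x₂ x₁]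
    ring
  constructor <;> intro hh <;> linarith [iden, hh]

lemma stmt18_ineq_to_cone (A B : Matrix (Fin n) (Fin n) ℝ) (hA : A.IsSymm) (hB : B.IsSymm)
    (hU : (B - A).PosDef) (h k : Fin n → ℝ)
    (hq : ((B - A)⁻¹ *ᵥ (k - (1/2 : ℝ) • ((A + B) *ᵥ h))) ⬝ᵥ
        (k - (1/2 : ℝ) • ((A + B) *ᵥ h)) ≤ (1/4) * (((B - A) *ᵥ h) ⬝ᵥ h)) :
    ∃ S : Matrix (Fin n) (Fin n) ℝ, S.IsSymm ∧ (S - A).PosSemidef ∧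
      (B - S).PosSemidef ∧ k = S *ᵥ h := by
  have hdet : IsUnit (B - A).det := isUnit_iff_ne_zero.mpr (ne_of_gt hU.det_pos)
  by_cases hh : h = 0
  · subst hh
    have hw0 : k - (1/2 : ℝ) • ((A + B) *ᵥ (0 : Fin n → ℝ)) = k := by
      simp [mulVec_zero]
    rw [hw0] at hq
    have h0 : (((B - A) *ᵥ (0 : Fin n → ℝ)) ⬝ᵥ (0 : Fin n → ℝ)) = 0 := by
      simp [mulVec_zero]
    rw [h0] at hq
    have hk0 : k = 0 := by
      by_contra hk
      have := hU.inv.dotProduct_mulVec_pos hk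
      simp only [star_trivial] at this
      rw [dotProduct_comm] at this
      linarith [this, hq]
    refine ⟨A, hA, by simpa [sub_self] using Matrix.PosSemidef.zero (n := Fin n) (R := ℝ),
      hU.posSemidef, ?_⟩
    rw [hk0, mulVec_zero]
  · set R := CFC.sqrt (B - A) with hR_def
    have hRR : R * R = B - A := CFC.sqrt_mul_sqrt_self (B - A) hU.posSemidef.nonneg
    have hRsymm : R.IsSymm := stmt18_isSymm_of_isHermitian (Matrix.nonneg_iff_posSemidef.mp (CFC.sqrt_nonneg (B - A))).1
    have hRdet : IsUnit R.det := by
      rw [isUnit_iff_ne_zero]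
      intro h0
      have : (B - A).det = 0 := by rw [← hRR, det_mul, h0, mul_zero]
      exact (ne_of_gt hU.det_pos) this
    have hRinv_symm : R⁻¹.IsSymm := by
      unfold Matrix.IsSymm
      rw [transpose_nonsing_inv, hRsymm.eq]
    set w : Fin n → ℝ := k - (1/2 : ℝ) • ((A + B) *ᵥ h) with hw_def
    set h' : Fin n → ℝ := R *ᵥ h with hh'_def
    set w' : Fin n → ℝ := R⁻¹ *ᵥ w with hw'_def
    have hh' : h' ≠ 0 := by
      intro h0
      apply hh
      have : R⁻¹ *ᵥ (R *ᵥ h) = h := by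
        rw [mulVec_mulVec, nonsing_inv_mul _ hRdet, one_mulVec]
      rw [← this, ← hh'_def, h0, mulVec_zero]
    have ehh : ((B - A) *ᵥ h) ⬝ᵥ h = h' ⬝ᵥ h' := by
      rw [hh'_def, stmt18_symm_dot hRsymm (R *ᵥ h) h, mulVec_mulVec, hRR, dotProduct_comm]
    have hUinv : (B - A)⁻¹ = R⁻¹ * R⁻¹ := by rw [← hRR, Matrix.mul_inv_rev]
    have eww : ((B - A)⁻¹ *ᵥ w) ⬝ᵥ w = w' ⬝ᵥ w' := by
      rw [hUinv, ← mulVec_mulVec, ← hw'_def, dotProduct_comm, stmt18_symm_dot hRinv_symm w w',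
        ← hw'_def]
    rw [eww, ehh] at hq
    obtain ⟨T, hTsymm, hTm, hTp, hTh⟩ := stmt18_exists_T h' w' hh' hq
    refine ⟨R * T * R + (1/2 : ℝ) • (A + B), ?_, ?_, ?_, ?_⟩
    · unfold Matrix.IsSymm
      rw [transpose_add, transpose_smul, transpose_add, hA.eq, hB.eq, transpose_mul,
        transpose_mul, hRsymm.eq, hTsymm.eq, Matrix.mul_assoc]
    · have e : R * T * R + (1/2 : ℝ) • (A + B) - A
          = R * ((1/2:ℝ) • (1 : Matrix (Fin n) (Fin n) ℝ) + T) * R := by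
        have : R * ((1/2:ℝ) • (1 : Matrix (Fin n) (Fin n) ℝ) + T) * R
            = (1/2 : ℝ) • (R * R) + R * T * R := by
          simp only [Matrix.mul_add, Matrix.add_mul, Matrix.mul_smul, Matrix.smul_mul,
            Matrix.mul_one]
        rw [this, hRR, smul_sub, smul_add]
        module
      rw [e]
      have := hTp.mul_mul_conjTranspose_same R
      rwa [show Rᴴ = R from (Matrix.nonneg_iff_posSemidef.mp (CFC.sqrt_nonneg (B - A))).1] at this
    · have e : B - (R * T * R + (1/2 : ℝ) • (A + B))
          = R * ((1/2:ℝ) • (1 : Matrix (Fin n) (Fin n) ℝ) - T) * R := by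
        have : R * ((1/2:ℝ) • (1 : Matrix (Fin n) (Fin n) ℝ) - T) * R
            = (1/2 : ℝ) • (R * R) - R * T * R := by
          simp only [Matrix.mul_sub, Matrix.sub_mul, Matrix.mul_smul, Matrix.smul_mul,
            Matrix.mul_one]
        rw [this, hRR, smul_sub, smul_add]
        module
      rw [e]
      have := hTm.mul_mul_conjTranspose_same R
      rwa [show Rᴴ = R from (Matrix.nonneg_iff_posSemidef.mp (CFC.sqrt_nonneg (B - A))).1] at this
    · have e : (R * T * R + (1/2 : ℝ) • (A + B)) *ᵥ h
          = R *ᵥ (T *ᵥ (R *ᵥ h)) + (1/2 : ℝ) • ((A + B) *ᵥ h) := by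
        rw [add_mulVec, smul_mulVec, ← mulVec_mulVec, ← mulVec_mulVec]
      rw [e, ← hh'_def, hTh, hw'_def, mulVec_mulVec, mul_nonsing_inv _ hRdet, one_mulVec,
        hw_def]
      abel

end Aux

theorem stmt18 (n : ℕ) (A B : Matrix (Fin n) (Fin n) ℝ)
    (hA : A.IsSymm) (hB : B.IsSymm) (hU : (B - A).PosDef) :
    (∀ h k x₁ x₂ : Fin n → ℝ,
      ((h, k) : (Fin n → ℝ) × (Fin n → ℝ)) = (x₁, A *ᵥ x₁) + (x₂, B *ᵥ x₂) →
      (Real.sqrt (((B - A)⁻¹ *ᵥ (k - (1/2 : ℝ) • ((A + B) *ᵥ h))) ⬝ᵥ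
            (k - (1/2 : ℝ) • ((A + B) *ᵥ h)))
          ≤ (1/2) * Real.sqrt (((B - A) *ᵥ h) ⬝ᵥ h) ↔
        0 ≤ omegaForm (x₁, A *ᵥ x₁) (x₂, B *ᵥ x₂))) ∧
    {p : (Fin n → ℝ) × (Fin n → ℝ) |
        Real.sqrt (((B - A)⁻¹ *ᵥ (p.2 - (1/2 : ℝ) • ((A + B) *ᵥ p.1))) ⬝ᵥ
            (p.2 - (1/2 : ℝ) • ((A + B) *ᵥ p.1)))
          ≤ (1/2) * Real.sqrt (((B - A) *ᵥ p.1) ⬝ᵥ p.1)}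
      = coneBetween A B := by
  have main_iff : ∀ h k : Fin n → ℝ,
      (Real.sqrt (((B - A)⁻¹ *ᵥ (k - (1/2 : ℝ) • ((A + B) *ᵥ h))) ⬝ᵥ
            (k - (1/2 : ℝ) • ((A + B) *ᵥ h)))
          ≤ (1/2) * Real.sqrt (((B - A) *ᵥ h) ⬝ᵥ h)) ↔
      (((B - A)⁻¹ *ᵥ (k - (1/2 : ℝ) • ((A + B) *ᵥ h))) ⬝ᵥ
            (k - (1/2 : ℝ) • ((A + B) *ᵥ h)) ≤ (1/4) * (((B - A) *ᵥ h) ⬝ᵥ h)) := by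
    intro h k
    apply stmt18_sqrt_half_iff
    · rw [dotProduct_comm]
      exact stmt18_quad_nonneg hU.inv.posSemidef _
    · rw [dotProduct_comm]
      exact stmt18_quad_nonneg hU.posSemidef h
  constructor
  · intro h k x₁ x₂ heq
    rw [Prod.mk_add_mk, Prod.mk.injEq] at heq
    obtain ⟨hh, hk⟩ := heq
    subst hh
    subst hk
    rw [main_iff]
    show _ ↔ 0 ≤ (B *ᵥ x₂) ⬝ᵥ x₁ - (A *ᵥ x₁) ⬝ᵥ x₂
    exact stmt18_part1_core A B hA hB hU x₁ x₂
  · ext p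
    obtain ⟨h, k⟩ := p
    simp only [Set.mem_setOf_eq, coneBetween]
    rw [main_iff h k]
    constructor
    · exact stmt18_ineq_to_cone A B hA hB hU h k
    · rintro ⟨S, hS, h1, h2, hk⟩
      rw [hk]
      exact stmt18_cone_to_ineq A B S hA hB hS hU h1 h2 h
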